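/- arXiv:math/0402454 — 2 statements merged into one kernel-verified Lean document; each statement's English description precedes it below -/
import Mathlib

section
/- There exists a nonzero polynomial P ∈ ℂ[λ,μ] such that whenever P(λ,μ) ≠ 0 and (q,a,c,d) ∈ ℂ⁴ satisfies q² + 2λq + 1 = 0, a(1 + λq) = −(λ + q), 2μcd = 3a² + 3, and c² + d² + 2a² − 2λa + 2 = 0, the orbit of the plane W(q,a,c,d) under the combined action of G' × H' on subspaces of ℂ⁸ has exactly 256 elements, each of which is a line on X_{λ,μ}; moreover, if g ∈ G' and h ∈ H' satisfy g·(h·W(q,a,c,d)) = W(q,a,c,d), then g·W(q,a,c,d) = W(q,a,c,d) and h·W(q,a,c,d) = W(q,a,c,d). -/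
noncomputable section

/-- `Q₁ = x₀²+x₁²+x₂²+x₃²+x₄²+x₅² − 2μx₆x₇`. -/
def Q1 (m : ℂ) (x : Fin 8 → ℂ) : ℂ :=
  x 0 ^ 2 + x 1 ^ 2 + x 2 ^ 2 + x 3 ^ 2 + x 4 ^ 2 + x 5 ^ 2 - 2 * m * x 6 * x 7

/-- `Q₂ = x₀²+x₁²+x₂²+x₃²+x₆²+x₇² − 2λx₄x₅`. -/
def Q2 (l : ℂ) (x : Fin 8 → ℂ) : ℂ :=
  x 0 ^ 2 + x 1 ^ 2 + x 2 ^ 2 + x 3 ^ 2 + x 6 ^ 2 + x 7 ^ 2 - 2 * l * x 4 * x 5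

/-- `Q₃ = x₀²+x₁²+x₄²+x₅²+x₆²+x₇² − 2λx₂x₃`. -/
def Q3 (l : ℂ) (x : Fin 8 → ℂ) : ℂ :=
  x 0 ^ 2 + x 1 ^ 2 + x 4 ^ 2 + x 5 ^ 2 + x 6 ^ 2 + x 7 ^ 2 - 2 * l * x 2 * x 3

/-- `Q₄ = x₂²+x₃²+x₄²+x₅²+x₆²+x₇² − 2λx₀x₁`. -/
def Q4 (l : ℂ) (x : Fin 8 → ℂ) : ℂ :=
  x 2 ^ 2 + x 3 ^ 2 + x 4 ^ 2 + x 5 ^ 2 + x 6 ^ 2 + x 7 ^ 2 - 2 * l * x 0 * x 1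

/-- The plane `W(q,a,c,d) ⊆ ℂ⁸` spanned by `u = (1,q,ω,ωq,ω²,ω²q,0,0)` and
`v = (a,1,a,1,a,1,c,d)`, for `ω` a primitive cube root of unity. -/
def linePlane8 (w q a c d : ℂ) : Submodule ℂ (Fin 8 → ℂ) :=
  Submodule.span ℂ
    {![1, q, w, w * q, w ^ 2, w ^ 2 * q, 0, 0], ![a, 1, a, 1, a, 1, c, d]}

/-- The system of equations characterizing the 8 lines of Lemma 4.1. -/
def lineEqs8 (l m q a c d : ℂ) : Prop :=
  q ^ 2 + 2 * l * q + 1 = 0 ∧ a * (1 + l * q) = -(l + q) ∧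
    2 * m * c * d = 3 * a ^ 2 + 3 ∧ c ^ 2 + d ^ 2 + 2 * a ^ 2 - 2 * l * a + 2 = 0

/-- The subgroup `G' ≤ S₈` generated by the transpositions `(0 1)`, `(2 3)`, `(4 5)`,
`(6 7)` and by the simultaneous block permutations of the pairs `{0,1}`, `{2,3}`,
`{4,5}` (the parallel copy of `S₃`, generated by its two block transpositions
`(0 2)(1 3)` and `(2 4)(3 5)`). -/
def Gperm8 : Subgroup (Equiv.Perm (Fin 8)) :=
  Subgroup.closure
    {Equiv.swap 0 1, Equiv.swap 2 3, Equiv.swap 4 5, Equiv.swap 6 7,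
      Equiv.swap 0 2 * Equiv.swap 1 3, Equiv.swap 2 4 * Equiv.swap 3 5}

/-- The subgroup `H' ≤ (ℂˣ)⁸` generated by `ε₁, ε₂, ε₃`. -/
def Hsigns8 : Subgroup (Fin 8 → ℂˣ) :=
  Subgroup.closure
    {![-1, -1, 1, 1, 1, 1, 1, 1], ![1, 1, -1, -1, 1, 1, 1, 1],
      ![1, 1, 1, 1, -1, -1, 1, 1]}

/-- Componentwise multiplication by `h ∈ (ℂˣ)⁸` as a linear map. -/
def diagMap8 (h : Fin 8 → ℂˣ) : (Fin 8 → ℂ) →ₗ[ℂ] (Fin 8 → ℂ) :=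
  LinearMap.pi fun i => (h i : ℂ) • LinearMap.proj i

/-- Coordinate permutation `x ↦ x ∘ σ` as a linear map. -/
def permMap8 (σ : Equiv.Perm (Fin 8)) : (Fin 8 → ℂ) →ₗ[ℂ] (Fin 8 → ℂ) :=
  LinearMap.funLeft ℂ ℂ σ

namespace Stmt16Aux

open Equiv

abbrev B3 := Fin 3 → Bool

def bi8 (b : Fin 3) (r : Bool) : Fin 8 := ⟨2 * b + cond r 1 0, by cases r <;> simp <;> omega⟩

def fd (π : Equiv.Perm (Fin 3)) (t : B3) (e : Bool) : Fin 8 → Fin 8 :=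
  ![bi8 (π 0) (t 0), bi8 (π 0) (!(t 0)), bi8 (π 1) (t 1), bi8 (π 1) (!(t 1)),
    bi8 (π 2) (t 2), bi8 (π 2) (!(t 2)), if e then 7 else 6, if e then 6 else 7]

lemma fin3cases (c : Fin 3) : c = 0 ∨ c = 1 ∨ c = 2 := by omega
lemma fin8cases (i : Fin 8) : i = 0 ∨ i = 1 ∨ i = 2 ∨ i = 3 ∨ i = 4 ∨ i = 5 ∨ i = 6 ∨ i = 7 := by
  omega

lemma fd_bi8 (π : Equiv.Perm (Fin 3)) (t : B3) (e : Bool) (c : Fin 3) (j : Bool) :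
    fd π t e (bi8 c j) = bi8 (π c) (xor j (t c)) := by
  rcases fin3cases c with rfl | rfl | rfl <;> cases j <;>
    simp only [Bool.false_xor, Bool.true_xor] <;> rfl

lemma fd_comp (π₁ π₂ : Equiv.Perm (Fin 3)) (t₁ t₂ : B3) (e₁ e₂ : Bool) (i : Fin 8) :
    fd π₁ t₁ e₁ (fd π₂ t₂ e₂ i)
      = fd (π₁ * π₂) (fun b => xor (t₂ b) (t₁ (π₂ b))) (xor e₁ e₂) i := by
  rcases fin8cases i with rfl | rfl | rfl | rfl | rfl | rfl | rfl | rfl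
  · show fd π₁ t₁ e₁ (bi8 (π₂ 0) (t₂ 0)) = bi8 ((π₁ * π₂) 0) _
    rw [fd_bi8, Perm.mul_apply]
  · show fd π₁ t₁ e₁ (bi8 (π₂ 0) (!(t₂ 0))) = bi8 ((π₁ * π₂) 0) _
    rw [fd_bi8, Perm.mul_apply]; congr 1; simp [Bool.not_xor]
  · show fd π₁ t₁ e₁ (bi8 (π₂ 1) (t₂ 1)) = bi8 ((π₁ * π₂) 1) _
    rw [fd_bi8, Perm.mul_apply]
  · show fd π₁ t₁ e₁ (bi8 (π₂ 1) (!(t₂ 1))) = bi8 ((π₁ * π₂) 1) _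
    rw [fd_bi8, Perm.mul_apply]; congr 1; simp [Bool.not_xor]
  · show fd π₁ t₁ e₁ (bi8 (π₂ 2) (t₂ 2)) = bi8 ((π₁ * π₂) 2) _
    rw [fd_bi8, Perm.mul_apply]
  · show fd π₁ t₁ e₁ (bi8 (π₂ 2) (!(t₂ 2))) = bi8 ((π₁ * π₂) 2) _
    rw [fd_bi8, Perm.mul_apply]; congr 1; simp [Bool.not_xor]
  · cases e₁ <;> cases e₂ <;> rfl
  · cases e₁ <;> cases e₂ <;> rfl

lemma fd_id (i : Fin 8) : fd 1 (fun _ => false) false i = i := by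
  rcases fin8cases i with rfl | rfl | rfl | rfl | rfl | rfl | rfl | rfl <;> rfl

lemma realize_mul {σ τ : Perm (Fin 8)} {π₁ t₁ e₁ π₂ t₂ e₂} (hσ : ⇑σ = fd π₁ t₁ e₁)
    (hτ : ⇑τ = fd π₂ t₂ e₂) :
    ⇑(σ * τ) = fd (π₁ * π₂) (fun b => xor (t₂ b) (t₁ (π₂ b))) (xor e₁ e₂) := by
  funext i
  rw [show (σ * τ) i = σ (τ i) from rfl, hσ, hτ, fd_comp]

/-- structural characterization of elements of `Gperm8` -/
lemma perm_struct {σ : Equiv.Perm (Fin 8)} (hσ : σ ∈ Gperm8) :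
    ∃ π t e, ⇑σ = fd π t e := by
  induction hσ using Subgroup.closure_induction with
  | mem g hg =>
      rcases hg with rfl | rfl | rfl | rfl | rfl | rfl
      · exact ⟨1, ![true, false, false], false, by funext i; revert i; decide⟩
      · exact ⟨1, ![false, true, false], false, by funext i; revert i; decide⟩
      · exact ⟨1, ![false, false, true], false, by funext i; revert i; decide⟩
      · exact ⟨1, ![false, false, false], true, by funext i; revert i; decide⟩
      · exact ⟨Equiv.swap 0 1, ![false, false, false], false, by funext i; revert i; decide⟩
      · exact ⟨Equiv.swap 1 2, ![false, false, false], false, by funext i; revert i; decide⟩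
  | one => exact ⟨1, fun _ => false, false, by funext i; exact (fd_id i).symm⟩
  | mul x y hx hy ihx ihy =>
      obtain ⟨π₁, t₁, e₁, h1⟩ := ihx
      obtain ⟨π₂, t₂, e₂, h2⟩ := ihy
      exact ⟨π₁ * π₂, fun b => xor (t₂ b) (t₁ (π₂ b)), xor e₁ e₂, realize_mul h1 h2⟩
  | inv x hx ihx =>
      obtain ⟨π, t, e, h⟩ := ihx
      refine ⟨π⁻¹, fun b => t (π⁻¹ b), e, ?_⟩
      funext i
      have hxi : x (fd π⁻¹ (fun b => t (π⁻¹ b)) e i) = i := by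
        rw [h, fd_comp]
        have h1 : (fun b => xor ((fun b => t (π⁻¹ b)) b) (t (π⁻¹ b))) = fun _ => false := by
          funext b; simp
        have h2 : (π * π⁻¹) = 1 := by group
        rw [h2]
        simp only [Bool.xor_self, h1]
        cases e <;> exact fd_id i
      calc x⁻¹ i = x⁻¹ (x (fd π⁻¹ (fun b => t (π⁻¹ b)) e i)) := by rw [hxi]
        _ = fd π⁻¹ (fun b => t (π⁻¹ b)) e i := Equiv.symm_apply_apply x _

lemma perm6 (π : Equiv.Perm (Fin 3)) :
    π = 1 ∨ π = Equiv.swap 0 1 ∨ π = Equiv.swap 1 2 ∨ π = Equiv.swap 0 1 * Equiv.swap 1 2 ∨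
      π = Equiv.swap 1 2 * Equiv.swap 0 1 ∨
      π = Equiv.swap 0 1 * Equiv.swap 1 2 * Equiv.swap 0 1 := by
  revert π; decide

lemma b3cases (t : B3) :
    t = (fun _ => false) ∨ t = (fun b => decide (b = 0)) ∨ t = (fun b => decide (b = 1)) ∨
    t = (fun b => decide (b = 2)) ∨ t = (fun b => decide (b ≠ 2)) ∨ t = (fun b => decide (b ≠ 1)) ∨
    t = (fun b => decide (b ≠ 0)) ∨ t = (fun _ => true) := by
  revert t; decide

lemma g01_mem : Equiv.swap (0:Fin 8) 1 ∈ Gperm8 :=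
  Subgroup.subset_closure (Set.mem_insert _ _)
lemma g23_mem : Equiv.swap (2:Fin 8) 3 ∈ Gperm8 :=
  Subgroup.subset_closure (Set.mem_insert_of_mem _ (Set.mem_insert _ _))
lemma g45_mem : Equiv.swap (4:Fin 8) 5 ∈ Gperm8 :=
  Subgroup.subset_closure (Set.mem_insert_of_mem _ (Set.mem_insert_of_mem _ (Set.mem_insert _ _)))
lemma g67_mem : Equiv.swap (6:Fin 8) 7 ∈ Gperm8 :=
  Subgroup.subset_closure (Set.mem_insert_of_mem _ (Set.mem_insert_of_mem _
    (Set.mem_insert_of_mem _ (Set.mem_insert _ _))))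
lemma gA_mem : Equiv.swap (0:Fin 8) 2 * Equiv.swap 1 3 ∈ Gperm8 :=
  Subgroup.subset_closure (Set.mem_insert_of_mem _ (Set.mem_insert_of_mem _
    (Set.mem_insert_of_mem _ (Set.mem_insert_of_mem _ (Set.mem_insert _ _)))))
lemma gB_mem : Equiv.swap (2:Fin 8) 4 * Equiv.swap 3 5 ∈ Gperm8 :=
  Subgroup.subset_closure (Set.mem_insert_of_mem _ (Set.mem_insert_of_mem _
    (Set.mem_insert_of_mem _ (Set.mem_insert_of_mem _ (Set.mem_insert_of_mem _ rfl)))))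

lemma realize_perm (π : Equiv.Perm (Fin 3)) :
    ∃ σ ∈ Gperm8, ⇑σ = fd π (fun _ => false) false := by
  have hA : ((Equiv.swap (0:Fin 8) 2 * Equiv.swap 1 3 : Equiv.Perm (Fin 8)) : Fin 8 → Fin 8)
      = fd (Equiv.swap 0 1) (fun _ => false) false := by funext i; revert i; decide
  have hB : ((Equiv.swap (2:Fin 8) 4 * Equiv.swap 3 5 : Equiv.Perm (Fin 8)) : Fin 8 → Fin 8)
      = fd (Equiv.swap 1 2) (fun _ => false) false := by funext i; revert i; decide
  have h1 : ⇑(1 : Perm (Fin 8)) = fd 1 (fun _ => false) false := by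
    funext i; exact (fd_id i).symm
  rcases perm6 π with rfl | rfl | rfl | rfl | rfl | rfl
  · exact ⟨1, one_mem _, h1⟩
  · exact ⟨_, gA_mem, hA⟩
  · exact ⟨_, gB_mem, hB⟩
  · exact ⟨_, mul_mem gA_mem gB_mem, by rw [realize_mul hA hB]; rfl⟩
  · exact ⟨_, mul_mem gB_mem gA_mem, by rw [realize_mul hB hA]; rfl⟩
  · exact ⟨_, mul_mem (mul_mem gA_mem gB_mem) gA_mem,
      by rw [realize_mul (realize_mul hA hB) hA]; rfl⟩

lemma realize_t (t : B3) : ∃ σ ∈ Gperm8, ⇑σ = fd 1 t false := by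
  rcases b3cases t with rfl | rfl | rfl | rfl | rfl | rfl | rfl | rfl
  · exact ⟨1, one_mem _, by funext i; exact (fd_id i).symm⟩
  · exact ⟨_, g01_mem, by funext i; revert i; decide⟩
  · exact ⟨_, g23_mem, by funext i; revert i; decide⟩
  · exact ⟨_, g45_mem, by funext i; revert i; decide⟩
  · exact ⟨_, mul_mem g01_mem g23_mem, by funext i; revert i; decide⟩
  · exact ⟨_, mul_mem g01_mem g45_mem, by funext i; revert i; decide⟩
  · exact ⟨_, mul_mem g23_mem g45_mem, by funext i; revert i; decide⟩
  · exact ⟨_, mul_mem (mul_mem g01_mem g23_mem) g45_mem, by funext i; revert i; decide⟩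

lemma realize_e (e : Bool) : ∃ σ ∈ Gperm8, ⇑σ = fd 1 (fun _ => false) e := by
  cases e
  · exact ⟨1, one_mem _, by funext i; exact (fd_id i).symm⟩
  · exact ⟨_, g67_mem, by funext i; revert i; decide⟩

lemma struct_realize (π : Equiv.Perm (Fin 3)) (t : B3) (e : Bool) :
    ∃ σ ∈ Gperm8, ⇑σ = fd π t e := by
  obtain ⟨σ1, hm1, h1⟩ := realize_perm π
  obtain ⟨σ2, hm2, h2⟩ := realize_t t
  obtain ⟨σ3, hm3, h3⟩ := realize_e e
  refine ⟨σ1 * σ2 * σ3, mul_mem (mul_mem hm1 hm2) hm3, ?_⟩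
  have k1 := realize_mul (realize_mul h1 h2) h3
  have h2' : (fun b => false ^^ (t ((1 : Perm (Fin 3)) b) ^^ false)) = t := by
    funext b; simp
  have h3' : ((false ^^ false) ^^ e) = e := by simp
  rw [k1, show π * 1 * 1 = π by group, h2', h3']

def sgu (b : Bool) : ℂˣ := cond b (-1) 1

def hsf (s : B3) : Fin 8 → ℂˣ :=
  ![sgu (s 0), sgu (s 0), sgu (s 1), sgu (s 1), sgu (s 2), sgu (s 2), 1, 1]

lemma sgu_mul (x y : Bool) : sgu x * sgu y = sgu (xor x y) := by
  cases x <;> cases y <;> simp [sgu]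

lemma sgu_inv (x : Bool) : (sgu x)⁻¹ = sgu x := by cases x <;> simp [sgu]

lemma hsf_mul (a b : B3) : hsf a * hsf b = hsf (fun j => xor (a j) (b j)) := by
  funext i
  rcases fin8cases i with rfl|rfl|rfl|rfl|rfl|rfl|rfl|rfl
  · exact sgu_mul _ _
  · exact sgu_mul _ _
  · exact sgu_mul _ _
  · exact sgu_mul _ _
  · exact sgu_mul _ _
  · exact sgu_mul _ _
  · exact one_mul 1
  · exact one_mul 1

lemma hsf_one : hsf (fun _ => false) = 1 := by
  funext i
  rcases fin8cases i with rfl|rfl|rfl|rfl|rfl|rfl|rfl|rfl <;> rfl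

lemma sign_struct {h : Fin 8 → ℂˣ} (hh : h ∈ Hsigns8) : ∃ s : B3, h = hsf s := by
  induction hh using Subgroup.closure_induction with
  | mem g hg =>
      rcases hg with rfl | rfl | rfl
      · exact ⟨![true, false, false], by
          funext i; rcases fin8cases i with rfl|rfl|rfl|rfl|rfl|rfl|rfl|rfl <;> rfl⟩
      · exact ⟨![false, true, false], by
          funext i; rcases fin8cases i with rfl|rfl|rfl|rfl|rfl|rfl|rfl|rfl <;> rfl⟩
      · exact ⟨![false, false, true], by
          funext i; rcases fin8cases i with rfl|rfl|rfl|rfl|rfl|rfl|rfl|rfl <;> rfl⟩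
  | one => exact ⟨fun _ => false, hsf_one.symm⟩
  | mul x y hx hy ihx ihy =>
      obtain ⟨s1, rfl⟩ := ihx
      obtain ⟨s2, rfl⟩ := ihy
      exact ⟨fun b => xor (s1 b) (s2 b), (hsf_mul s1 s2).symm ▸ rfl⟩
  | inv x hx ihx =>
      obtain ⟨s, rfl⟩ := ihx
      refine ⟨s, ?_⟩
      funext i
      rcases fin8cases i with rfl|rfl|rfl|rfl|rfl|rfl|rfl|rfl
      · exact sgu_inv _
      · exact sgu_inv _
      · exact sgu_inv _
      · exact sgu_inv _
      · exact sgu_inv _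
      · exact sgu_inv _
      · exact inv_one
      · exact inv_one

lemma sign_realize (s : B3) : hsf s ∈ Hsigns8 := by
  have e1 : (![-1, -1, 1, 1, 1, 1, 1, 1] : Fin 8 → ℂˣ) ∈ Hsigns8 :=
    Subgroup.subset_closure (Set.mem_insert _ _)
  have e2 : (![1, 1, -1, -1, 1, 1, 1, 1] : Fin 8 → ℂˣ) ∈ Hsigns8 :=
    Subgroup.subset_closure (Set.mem_insert_of_mem _ (Set.mem_insert _ _))
  have e3 : (![1, 1, 1, 1, -1, -1, 1, 1] : Fin 8 → ℂˣ) ∈ Hsigns8 :=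
    Subgroup.subset_closure (Set.mem_insert_of_mem _ (Set.mem_insert_of_mem _ rfl))
  have he1 : (![-1, -1, 1, 1, 1, 1, 1, 1] : Fin 8 → ℂˣ) = hsf ![true, false, false] := by
    funext i; rcases fin8cases i with rfl|rfl|rfl|rfl|rfl|rfl|rfl|rfl <;> rfl
  have he2 : (![1, 1, -1, -1, 1, 1, 1, 1] : Fin 8 → ℂˣ) = hsf ![false, true, false] := by
    funext i; rcases fin8cases i with rfl|rfl|rfl|rfl|rfl|rfl|rfl|rfl <;> rfl
  have he3 : (![1, 1, 1, 1, -1, -1, 1, 1] : Fin 8 → ℂˣ) = hsf ![false, false, true] := by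
    funext i; rcases fin8cases i with rfl|rfl|rfl|rfl|rfl|rfl|rfl|rfl <;> rfl
  have m1 : hsf (fun b => s 0 && decide (b = 0)) ∈ Hsigns8 := by
    cases h0 : s 0
    · have : (fun b : Fin 3 => false && decide (b = 0)) = (fun _ => false) := by
        funext b; simp
      rw [this, hsf_one]; exact one_mem _
    · have : (fun b : Fin 3 => true && decide (b = 0)) = (![true, false, false] : B3) := by
        funext b; rcases fin3cases b with rfl|rfl|rfl <;> rfl
      rw [this, ← he1]; exact e1
  have m2 : hsf (fun b => s 1 && decide (b = 1)) ∈ Hsigns8 := by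
    cases h1 : s 1
    · have : (fun b : Fin 3 => false && decide (b = 1)) = (fun _ => false) := by
        funext b; simp
      rw [this, hsf_one]; exact one_mem _
    · have : (fun b : Fin 3 => true && decide (b = 1)) = (![false, true, false] : B3) := by
        funext b; rcases fin3cases b with rfl|rfl|rfl <;> rfl
      rw [this, ← he2]; exact e2
  have m3 : hsf (fun b => s 2 && decide (b = 2)) ∈ Hsigns8 := by
    cases h2 : s 2
    · have : (fun b : Fin 3 => false && decide (b = 2)) = (fun _ => false) := by
        funext b; simp
      rw [this, hsf_one]; exact one_mem _
    · have : (fun b : Fin 3 => true && decide (b = 2)) = (![false, false, true] : B3) := by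
        funext b; rcases fin3cases b with rfl|rfl|rfl <;> rfl
      rw [this, ← he3]; exact e3
  have key : hsf s = hsf (fun b => s 0 && decide (b = 0)) *
      (hsf (fun b => s 1 && decide (b = 1)) * hsf (fun b => s 2 && decide (b = 2))) := by
    rw [hsf_mul, hsf_mul]
    refine congrArg hsf ?_
    funext b
    rcases fin3cases b with rfl|rfl|rfl <;> simp
  rw [key]
  exact mul_mem m1 (mul_mem m2 m3)

/-! ### vectors -/

def sgc (b : Bool) : ℂ := cond b (-1) 1
def cnt (b : Bool) : ℕ := cond b 1 0
def av (a : ℂ) (b : Bool) : ℂ := cond b 1 a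

def uvec (w q : ℂ) : Fin 8 → ℂ := ![1, q, w, w * q, w ^ 2, w ^ 2 * q, 0, 0]
def vvec (a c d : ℂ) : Fin 8 → ℂ := ![a, 1, a, 1, a, 1, c, d]

def UU (w q : ℂ) (π : Perm (Fin 3)) (t s : B3) (e : Bool) : Fin 8 → ℂ :=
  fun i => ((hsf s (fd π t e i) : ℂˣ) : ℂ) * uvec w q (fd π t e i)

def VV (a c d : ℂ) (π : Perm (Fin 3)) (t s : B3) (e : Bool) : Fin 8 → ℂ :=
  fun i => ((hsf s (fd π t e i) : ℂˣ) : ℂ) * vvec a c d (fd π t e i)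

def FF (w q a c d : ℂ) (π : Perm (Fin 3)) (t s : B3) (e : Bool) : Submodule ℂ (Fin 8 → ℂ) :=
  Submodule.span ℂ {UU w q π t s e, VV a c d π t s e}

lemma sgu_coe (b : Bool) : ((sgu b : ℂˣ) : ℂ) = sgc b := by cases b <;> rfl

lemma sgc_ne (b : Bool) : sgc b ≠ 0 := by cases b <;> norm_num [sgc]

lemma sgc_sq (b : Bool) : sgc b * sgc b = 1 := by cases b <;> norm_num [sgc]

lemma hsf_bi8 (s : B3) (c : Fin 3) (j : Bool) : hsf s (bi8 c j) = sgu (s c) := by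
  rcases fin3cases c with rfl|rfl|rfl <;> cases j <;> rfl

lemma uvec_bi8 (w q : ℂ) (c : Fin 3) (j : Bool) :
    uvec w q (bi8 c j) = w ^ (c : ℕ) * q ^ cnt j := by
  rcases fin3cases c with rfl|rfl|rfl <;> cases j <;>
    simp only [cnt, cond, Fin.val_zero, Fin.val_one, Fin.val_two, pow_zero, pow_one,
      mul_one, one_mul] <;> rfl

lemma vvec_bi8 (a c d : ℂ) (cc : Fin 3) (j : Bool) :
    vvec a c d (bi8 cc j) = av a j := by
  rcases fin3cases cc with rfl|rfl|rfl <;> cases j <;> rfl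

lemma UU_bi8 (w q : ℂ) (π : Perm (Fin 3)) (t s : B3) (e : Bool) (b : Fin 3) (r : Bool) :
    UU w q π t s e (bi8 b r)
      = sgc (s (π b)) * (w ^ ((π b : Fin 3) : ℕ) * q ^ cnt (xor r (t b))) := by
  show ((hsf s (fd π t e (bi8 b r)) : ℂˣ) : ℂ) * uvec w q (fd π t e (bi8 b r)) = _
  rw [fd_bi8, hsf_bi8, uvec_bi8, sgu_coe]

lemma VV_bi8 (a c d : ℂ) (π : Perm (Fin 3)) (t s : B3) (e : Bool) (b : Fin 3) (r : Bool) :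
    VV a c d π t s e (bi8 b r) = sgc (s (π b)) * av a (xor r (t b)) := by
  show ((hsf s (fd π t e (bi8 b r)) : ℂˣ) : ℂ) * vvec a c d (fd π t e (bi8 b r)) = _
  rw [fd_bi8, hsf_bi8, vvec_bi8, sgu_coe]

lemma UU_6 (w q : ℂ) (π : Perm (Fin 3)) (t s : B3) (e : Bool) : UU w q π t s e 6 = 0 := by
  cases e <;> (show ((1:ℂˣ):ℂ) * (0:ℂ) = 0; simp)

lemma UU_7 (w q : ℂ) (π : Perm (Fin 3)) (t s : B3) (e : Bool) : UU w q π t s e 7 = 0 := by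
  cases e <;> (show ((1:ℂˣ):ℂ) * (0:ℂ) = 0; simp)

lemma VV_6 (a c d : ℂ) (π : Perm (Fin 3)) (t s : B3) (e : Bool) :
    VV a c d π t s e 6 = cond e d c := by
  cases e
  · show ((1:ℂˣ):ℂ) * c = c; simp
  · show ((1:ℂˣ):ℂ) * d = d; simp

lemma VV_7 (a c d : ℂ) (π : Perm (Fin 3)) (t s : B3) (e : Bool) :
    VV a c d π t s e 7 = cond e c d := by
  cases e
  · show ((1:ℂˣ):ℂ) * d = d; simp
  · show ((1:ℂˣ):ℂ) * c = c; simp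

section WFacts

variable {w : ℂ}

lemma w_pow_inj (hw3 : w ^ 3 = 1) (hw1 : w ≠ 1) (hw0 : w ≠ 0) :
    ∀ x y : Fin 3, w ^ (x : ℕ) = w ^ (y : ℕ) → x = y := by
  have h21 : w ^ 2 ≠ 1 := by
    intro h
    exact hw1 (by linear_combination hw3 - w * h)
  have hww : w ^ 2 ≠ w := by
    intro h
    have h' : w * w = w * 1 := by linear_combination h
    exact hw1 (mul_left_cancel₀ hw0 h')
  intro x y
  rcases fin3cases x with rfl|rfl|rfl <;> rcases fin3cases y with rfl|rfl|rfl <;>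
    intro h <;> first
      | rfl
      | (exfalso; simp only [Fin.val_zero, Fin.val_one, Fin.val_two, pow_zero, pow_one] at h;
         first
           | exact hw1 h.symm
           | exact hw1 h
           | exact h21 h.symm
           | exact h21 h
           | exact hww h.symm
           | exact hww h)

lemma w_pow_add (hw3 : w ^ 3 = 1) :
    ∀ x y : Fin 3, w ^ ((x + y : Fin 3) : ℕ) = w ^ (x : ℕ) * w ^ (y : ℕ) := by
  intro x y
  rcases fin3cases x with rfl|rfl|rfl <;> rcases fin3cases y with rfl|rfl|rfl <;>
    (try norm_num) <;> (try rw [show (((3:Fin 3)):ℕ) = 0 from rfl]) <;>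
    (try simp only [show ((1 + 1 : Fin 3) : ℕ) = 2 from rfl, show ((1 + 2 : Fin 3) : ℕ) = 0 from rfl,
      show ((2 + 1 : Fin 3) : ℕ) = 0 from rfl, show ((2 + 2 : Fin 3) : ℕ) = 1 from rfl,
      pow_zero, pow_one]) <;>
    (try rw [show (((4:Fin 3)):ℕ) = 1 from rfl]) <;>
    first
      | rfl
      | ring1
      | linear_combination (-1 : ℂ) * hw3
      | linear_combination (-w) * hw3

end WFacts

lemma span_pair_smul_left {u v : Fin 8 → ℂ} (r : ℂ) (hr : r ≠ 0) :
    Submodule.span ℂ {r • u, v} = Submodule.span ℂ {u, v} := by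
  apply le_antisymm
  · rw [Submodule.span_le, Set.insert_subset_iff, Set.singleton_subset_iff]
    exact ⟨Submodule.smul_mem _ r (Submodule.subset_span (Set.mem_insert _ _)),
      Submodule.subset_span (Set.mem_insert_of_mem _ rfl)⟩
  · rw [Submodule.span_le, Set.insert_subset_iff, Set.singleton_subset_iff]
    constructor
    · have hmem : r⁻¹ • (r • u) ∈ Submodule.span ℂ {r • u, v} :=
        Submodule.smul_mem _ _ (Submodule.subset_span (Set.mem_insert _ _))
      rwa [smul_smul, inv_mul_cancel₀ hr, one_smul] at hmem
    · exact Submodule.subset_span (Set.mem_insert_of_mem _ rfl)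

lemma FF_eq_of_rel {w q a c d : ℂ} (hw3 : w ^ 3 = 1) (hw0 : w ≠ 0)
    (π₁ π₂ : Equiv.Perm (Fin 3)) (t s₁ s₂ : B3) (e : Bool) (k : Fin 3)
    (hπ : ∀ b, π₂ b = π₁ b + k) (hsg : ∀ b, s₂ (π₂ b) = s₁ (π₁ b)) :
    FF w q a c d π₂ t s₂ e = FF w q a c d π₁ t s₁ e := by
  have key : ∀ (b : Fin 3) (r : Bool), UU w q π₂ t s₂ e (bi8 b r)
      = w ^ (k : ℕ) * UU w q π₁ t s₁ e (bi8 b r) := by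
    intro b r
    rw [UU_bi8, UU_bi8, hsg b, hπ b, w_pow_add hw3]
    ring
  have hu : UU w q π₂ t s₂ e = (w ^ (k : ℕ)) • UU w q π₁ t s₁ e := by
    funext i
    rcases fin8cases i with rfl|rfl|rfl|rfl|rfl|rfl|rfl|rfl
    · exact key 0 false
    · exact key 0 true
    · exact key 1 false
    · exact key 1 true
    · exact key 2 false
    · exact key 2 true
    · rw [Pi.smul_apply, UU_6, UU_6, smul_zero]
    · rw [Pi.smul_apply, UU_7, UU_7, smul_zero]
  have key2 : ∀ (b : Fin 3) (r : Bool), VV a c d π₂ t s₂ e (bi8 b r)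
      = VV a c d π₁ t s₁ e (bi8 b r) := by
    intro b r
    rw [VV_bi8, VV_bi8, hsg b]
  have hv : VV a c d π₂ t s₂ e = VV a c d π₁ t s₁ e := by
    funext i
    rcases fin8cases i with rfl|rfl|rfl|rfl|rfl|rfl|rfl|rfl
    · exact key2 0 false
    · exact key2 0 true
    · exact key2 1 false
    · exact key2 1 true
    · exact key2 2 false
    · exact key2 2 true
    · rw [VV_6, VV_6]
    · rw [VV_7, VV_7]
  show Submodule.span ℂ _ = Submodule.span ℂ _
  rw [hu, hv, span_pair_smul_left _ (pow_ne_zero _ hw0)]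

lemma xor_not_self' (x : Bool) : ((!x) ^^ x) = true := by cases x <;> rfl

lemma sgc_neq_neg {x y : Bool} (h : sgc x ≠ sgc y) : sgc x = -sgc y := by
  cases x <;> cases y <;> simp [sgc] at h ⊢

lemma sgc_inj {x y : Bool} (h : sgc x = sgc y) : x = y := by
  cases x <;> cases y <;> first | rfl | (exfalso; norm_num [sgc] at h)

lemma fin3_shift : ∀ x y p r : Fin 3, x + p = y + r → x = y + (r - p) := by decide

lemma rel_of_FF_eq {w q a c d : ℂ}
    (hw3 : w ^ 3 = 1) (hw1 : w ≠ 1) (hw0 : w ≠ 0)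
    (hq0 : q ≠ 0) (hq2 : q ^ 2 ≠ 1)
    (hc : c ≠ 0) (hd : d ≠ 0) (hcd : c ^ 2 ≠ d ^ 2)
    (π₁ π₂ : Equiv.Perm (Fin 3)) (t₁ t₂ s₁ s₂ : B3) (e₁ e₂ : Bool)
    (hFF : FF w q a c d π₂ t₂ s₂ e₂ = FF w q a c d π₁ t₁ s₁ e₁) :
    t₁ = t₂ ∧ e₁ = e₂ ∧ ∃ k : Fin 3, (∀ b, π₂ b = π₁ b + k) ∧ (∀ b, s₂ (π₂ b) = s₁ (π₁ b)) := by
  have hUmem : UU w q π₂ t₂ s₂ e₂ ∈ FF w q a c d π₁ t₁ s₁ e₁ := by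
    rw [← hFF]; exact Submodule.subset_span (Set.mem_insert _ _)
  obtain ⟨α, β, hαβ⟩ := Submodule.mem_span_pair.mp hUmem
  have hcond1 : (cond e₁ d c : ℂ) ≠ 0 := by cases e₁ <;> [exact hc; exact hd]
  have hcond2 : (cond e₁ c d : ℂ) ≠ 0 := by cases e₁ <;> [exact hd; exact hc]
  have hβ : β = 0 := by
    have h6 := congrFun hαβ 6
    simp only [Pi.add_apply, Pi.smul_apply, smul_eq_mul, UU_6, VV_6, mul_zero, zero_add] at h6
    exact (mul_eq_zero.mp h6).resolve_right hcond1
  have hcoord : ∀ (b : Fin 3) (r : Bool),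
      sgc (s₂ (π₂ b)) * (w ^ ((π₂ b : Fin 3) : ℕ) * q ^ cnt (xor r (t₂ b)))
        = α * (sgc (s₁ (π₁ b)) * (w ^ ((π₁ b : Fin 3) : ℕ) * q ^ cnt (xor r (t₁ b)))) := by
    intro b r
    have h := congrFun hαβ (bi8 b r)
    rw [hβ] at h
    simp only [Pi.add_apply, Pi.smul_apply, smul_eq_mul, zero_mul, add_zero,
      UU_bi8, VV_bi8] at h
    exact h.symm
  have hα : α ≠ 0 := by
    intro h0
    have h := hcoord 0 false
    rw [h0, zero_mul] at h
    exact (mul_ne_zero (sgc_ne _) (mul_ne_zero (pow_ne_zero _ hw0) (pow_ne_zero _ hq0))) h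
  have ht : t₁ = t₂ := by
    funext b
    by_contra hne
    have hf := hcoord b false
    have htr := hcoord b true
    have hS2 := sgc_ne (s₂ (π₂ b))
    have hW2 : w ^ ((π₂ b : Fin 3) : ℕ) ≠ 0 := pow_ne_zero _ hw0
    have hfac : α * (sgc (s₁ (π₁ b)) * w ^ ((π₁ b : Fin 3) : ℕ)) * (q ^ 2 - 1) = 0 := by
      cases h1 : t₁ b <;> cases h2 : t₂ b
      · exact absurd (h1.trans h2.symm) hne
      · rw [h1, h2] at hf htr
        simp only [Bool.xor_false, Bool.xor_true, Bool.not_false, Bool.not_true,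
          cnt, cond, pow_zero, pow_one, mul_one] at hf htr
        linear_combination hf - q * htr
      · rw [h1, h2] at hf htr
        simp only [Bool.xor_false, Bool.xor_true, Bool.not_false, Bool.not_true,
          cnt, cond, pow_zero, pow_one, mul_one] at hf htr
        linear_combination htr - q * hf
      · exact absurd (h1.trans h2.symm) hne
    rcases mul_eq_zero.mp hfac with h | h
    · rcases mul_eq_zero.mp h with h' | h'
      · exact hα h'
      · rcases mul_eq_zero.mp h' with h'' | h''
        · exact sgc_ne _ h''
        · exact pow_ne_zero _ hw0 h''
    · exact hq2 (by linear_combination h)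
  subst ht
  have hE : ∀ b, sgc (s₂ (π₂ b)) * w ^ ((π₂ b : Fin 3) : ℕ)
      = α * (sgc (s₁ (π₁ b)) * w ^ ((π₁ b : Fin 3) : ℕ)) := by
    intro b
    have h := hcoord b (t₁ b)
    simp only [Bool.xor_self, cnt, cond, pow_zero, mul_one] at h
    linear_combination h
  -- now the v vector
  have hVmem : VV a c d π₂ t₁ s₂ e₂ ∈ FF w q a c d π₁ t₁ s₁ e₁ := by
    rw [← hFF]; exact Submodule.subset_span (Set.mem_insert_of_mem _ rfl)
  obtain ⟨γ, δ, hγδ⟩ := Submodule.mem_span_pair.mp hVmem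
  have h6 := congrFun hγδ 6
  have h7 := congrFun hγδ 7
  simp only [Pi.add_apply, Pi.smul_apply, smul_eq_mul, UU_6, UU_7, VV_6, VV_7,
    mul_zero, zero_add] at h6 h7
  have he : e₁ = e₂ ∧ δ = 1 := by
    cases e₁ <;> cases e₂ <;> simp only [cond] at h6 h7 hcond1 hcond2
    · exact ⟨rfl, mul_right_cancel₀ hc (by linear_combination h6)⟩
    · exfalso; exact hcd (by linear_combination d * h6 - c * h7)
    · exfalso; exact hcd (by linear_combination d * h7 - c * h6)
    · exact ⟨rfl, mul_right_cancel₀ hd (by linear_combination h6)⟩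
  obtain ⟨he12, hδ⟩ := he
  have hv : ∀ b, sgc (s₂ (π₂ b))
      = γ * (sgc (s₁ (π₁ b)) * (w ^ ((π₁ b : Fin 3) : ℕ) * q)) + sgc (s₁ (π₁ b)) := by
    intro b
    have h := congrFun hγδ (bi8 b (!(t₁ b)))
    rw [hδ] at h
    simp only [Pi.add_apply, Pi.smul_apply, smul_eq_mul, UU_bi8, VV_bi8, xor_not_self',
      cnt, av, cond, pow_one, one_mul, mul_one] at h
    linear_combination (-1 : ℂ) * h
  have hγ : γ = 0 := by
    by_contra hγ0
    have hall : ∀ b, sgc (s₂ (π₂ b)) ≠ sgc (s₁ (π₁ b)) := by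
      intro b hb
      apply hγ0
      have h := hv b
      rw [hb] at h
      have h' : γ * (sgc (s₁ (π₁ b)) * (w ^ ((π₁ b : Fin 3) : ℕ) * q)) = 0 := by
        linear_combination (-1 : ℂ) * h
      rcases mul_eq_zero.mp h' with h'' | h''
      · exact h''
      · exfalso
        exact (mul_ne_zero (sgc_ne _)
          (mul_ne_zero (pow_ne_zero _ hw0) hq0)) h''
    have key : ∀ b, γ * (w ^ ((π₁ b : Fin 3) : ℕ) * q) = -2 := by
      intro b
      have hb := sgc_neq_neg (hall b)
      have h := hv b
      rw [hb] at h
      have h' : (γ * (w ^ ((π₁ b : Fin 3) : ℕ) * q)) * sgc (s₁ (π₁ b))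
          = (-2) * sgc (s₁ (π₁ b)) := by linear_combination (-1 : ℂ) * h
      exact mul_right_cancel₀ (sgc_ne _) h'
    have h01 : γ * (w ^ ((π₁ 0 : Fin 3) : ℕ) * q) = γ * (w ^ ((π₁ 1 : Fin 3) : ℕ) * q) :=
      (key 0).trans (key 1).symm
    have hW : w ^ ((π₁ 0 : Fin 3) : ℕ) = w ^ ((π₁ 1 : Fin 3) : ℕ) :=
      mul_right_cancel₀ hq0 (mul_left_cancel₀ hγ0 h01)
    have := π₁.injective (w_pow_inj hw3 hw1 hw0 _ _ hW)
    exact absurd this (by decide)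
  have hS : ∀ b, s₂ (π₂ b) = s₁ (π₁ b) := by
    intro b
    have h := hv b
    rw [hγ, zero_mul, zero_add] at h
    exact sgc_inj h
  refine ⟨rfl, he12, π₂ 0 - π₁ 0, ?_, hS⟩
  intro b
  have hE' : ∀ b, w ^ ((π₂ b : Fin 3) : ℕ) = α * w ^ ((π₁ b : Fin 3) : ℕ) := by
    intro b
    have h := hE b
    rw [hS b] at h
    have h' : w ^ ((π₂ b : Fin 3) : ℕ) * sgc (s₁ (π₁ b))
        = (α * w ^ ((π₁ b : Fin 3) : ℕ)) * sgc (s₁ (π₁ b)) := by linear_combination h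
    exact mul_right_cancel₀ (sgc_ne _) h'
  have hcross : w ^ ((π₂ b + π₁ 0 : Fin 3) : ℕ) = w ^ ((π₁ b + π₂ 0 : Fin 3) : ℕ) := by
    rw [w_pow_add hw3, w_pow_add hw3, hE' b, hE' 0]
    ring
  exact fin3_shift _ _ _ _ (w_pow_inj hw3 hw1 hw0 _ _ hcross)

lemma FF_rank {w q a c d : ℂ} (hw0 : w ≠ 0) (hq0 : q ≠ 0) (hc : c ≠ 0) (hd : d ≠ 0)
    (π : Equiv.Perm (Fin 3)) (t s : B3) (e : Bool) :
    Module.finrank ℂ (FF w q a c d π t s e : Submodule ℂ (Fin 8 → ℂ)) = 2 := by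
  have hcond : (cond e d c : ℂ) ≠ 0 := by cases e <;> [exact hc; exact hd]
  have hli : LinearIndependent ℂ ![UU w q π t s e, VV a c d π t s e] := by
    rw [LinearIndependent.pair_iff]
    intro x y hxy
    have h6 := congrFun hxy 6
    simp only [Pi.add_apply, Pi.smul_apply, smul_eq_mul, UU_6, VV_6, Pi.zero_apply,
      mul_zero, zero_add] at h6
    have hy : y = 0 := (mul_eq_zero.mp h6).resolve_right hcond
    have h0 := congrFun hxy (bi8 0 false)
    rw [hy] at h0
    simp only [Pi.add_apply, Pi.smul_apply, smul_eq_mul, UU_bi8, Pi.zero_apply,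
      zero_mul, add_zero] at h0
    rcases mul_eq_zero.mp h0 with h | h
    · exact ⟨h, hy⟩
    · exact absurd h (mul_ne_zero (sgc_ne _)
        (mul_ne_zero (pow_ne_zero _ hw0) (pow_ne_zero _ hq0)))
  have hrange : Set.range ![UU w q π t s e, VV a c d π t s e]
      = {UU w q π t s e, VV a c d π t s e} := by
    ext z
    simp [Matrix.range_cons, Matrix.range_empty]
    tauto
  have := finrank_span_eq_card hli
  rw [hrange] at this
  rw [show (FF w q a c d π t s e : Submodule ℂ (Fin 8 → ℂ))
    = Submodule.span ℂ {UU w q π t s e, VV a c d π t s e} from rfl, this]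
  simp

lemma FF_LQ {w l m q a c d : ℂ} (hw3 : w ^ 3 = 1) (hwsum : w ^ 2 + w + 1 = 0)
    (heq1 : q ^ 2 + 2 * l * q + 1 = 0) (heq2 : a * (1 + l * q) = -(l + q))
    (heq3 : 2 * m * c * d = 3 * a ^ 2 + 3)
    (heq4 : c ^ 2 + d ^ 2 + 2 * a ^ 2 - 2 * l * a + 2 = 0)
    (π : Equiv.Perm (Fin 3)) (t s : B3) (e : Bool) :
    ∀ x ∈ FF w q a c d π t s e,
      Q1 m x = 0 ∧ Q2 l x = 0 ∧ Q3 l x = 0 ∧ Q4 l x = 0 := by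
  intro x hx
  obtain ⟨α, β, hx⟩ := Submodule.mem_span_pair.mp hx
  subst hx
  set X := α • UU w q π t s e + β • VV a c d π t s e with hX
  have hval : ∀ (b : Fin 3) (r : Bool), X (bi8 b r)
      = sgc (s (π b)) * (α * (w ^ ((π b : Fin 3) : ℕ) * q ^ cnt (xor r (t b)))
          + β * av a (xor r (t b))) := by
    intro b r
    simp only [hX, Pi.add_apply, Pi.smul_apply, smul_eq_mul, UU_bi8, VV_bi8]
    ring
  have h6 : X 6 = β * cond e d c := by
    simp only [hX, Pi.add_apply, Pi.smul_apply, smul_eq_mul, UU_6, VV_6, mul_zero, zero_add]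
  have h7 : X 7 = β * cond e c d := by
    simp only [hX, Pi.add_apply, Pi.smul_apply, smul_eq_mul, UU_7, VV_7, mul_zero, zero_add]
  have pairsq : ∀ b : Fin 3, (X (bi8 b false)) ^ 2 + (X (bi8 b true)) ^ 2
      = (α * w ^ ((π b : Fin 3) : ℕ) + β * a) ^ 2
        + (α * w ^ ((π b : Fin 3) : ℕ) * q + β) ^ 2 := by
    intro b
    rw [hval b false, hval b true]
    cases hsv : s (π b) <;> cases htv : t b <;>
      simp only [sgc, av, cnt, cond, Bool.xor_false, Bool.xor_true, Bool.not_false,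
        Bool.not_true, Bool.false_xor, Bool.true_xor, pow_zero, pow_one] <;> ring
  have pairpr : ∀ b : Fin 3, (X (bi8 b false)) * (X (bi8 b true))
      = (α * w ^ ((π b : Fin 3) : ℕ) + β * a)
        * (α * w ^ ((π b : Fin 3) : ℕ) * q + β) := by
    intro b
    rw [hval b false, hval b true]
    cases hsv : s (π b) <;> cases htv : t b <;>
      simp only [sgc, av, cnt, cond, Bool.xor_false, Bool.xor_true, Bool.not_false,
        Bool.not_true, Bool.false_xor, Bool.true_xor, pow_zero, pow_one] <;> ring
  have h67sq : X 6 ^ 2 + X 7 ^ 2 = β ^ 2 * (c ^ 2 + d ^ 2) := by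
    rw [h6, h7]; cases e <;> simp only [cond] <;> ring
  have h67pr : X 6 * X 7 = β ^ 2 * (c * d) := by
    rw [h6, h7]; cases e <;> simp only [cond] <;> ring
  have sum1 : w ^ ((π 0 : Fin 3) : ℕ) + w ^ ((π 1 : Fin 3) : ℕ) + w ^ ((π 2 : Fin 3) : ℕ)
      = 1 + w + w ^ 2 := by
    have h1 := Equiv.sum_comp π (fun c : Fin 3 => w ^ ((c : Fin 3) : ℕ))
    rw [Fin.sum_univ_three, Fin.sum_univ_three] at h1
    rw [show ((0 : Fin 3) : ℕ) = 0 from rfl, show ((1 : Fin 3) : ℕ) = 1 from rfl,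
      show ((2 : Fin 3) : ℕ) = 2 from rfl, pow_zero, pow_one] at h1
    exact h1
  have sum2 : (w ^ ((π 0 : Fin 3) : ℕ)) ^ 2 + (w ^ ((π 1 : Fin 3) : ℕ)) ^ 2
      + (w ^ ((π 2 : Fin 3) : ℕ)) ^ 2 = 1 + w ^ 2 + w ^ 4 := by
    have h1 := Equiv.sum_comp π (fun c : Fin 3 => (w ^ ((c : Fin 3) : ℕ)) ^ 2)
    rw [Fin.sum_univ_three, Fin.sum_univ_three] at h1
    rw [show ((0 : Fin 3) : ℕ) = 0 from rfl, show ((1 : Fin 3) : ℕ) = 1 from rfl,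
      show ((2 : Fin 3) : ℕ) = 2 from rfl, pow_zero, pow_one] at h1
    rw [h1]
    ring
  have p0 : X 0 ^ 2 + X 1 ^ 2 = (α * w ^ ((π 0 : Fin 3) : ℕ) + β * a) ^ 2
      + (α * w ^ ((π 0 : Fin 3) : ℕ) * q + β) ^ 2 := pairsq 0
  have p1 : X 2 ^ 2 + X 3 ^ 2 = (α * w ^ ((π 1 : Fin 3) : ℕ) + β * a) ^ 2
      + (α * w ^ ((π 1 : Fin 3) : ℕ) * q + β) ^ 2 := pairsq 1
  have p2 : X 4 ^ 2 + X 5 ^ 2 = (α * w ^ ((π 2 : Fin 3) : ℕ) + β * a) ^ 2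
      + (α * w ^ ((π 2 : Fin 3) : ℕ) * q + β) ^ 2 := pairsq 2
  have pr0 : X 0 * X 1 = (α * w ^ ((π 0 : Fin 3) : ℕ) + β * a)
      * (α * w ^ ((π 0 : Fin 3) : ℕ) * q + β) := pairpr 0
  have pr1 : X 2 * X 3 = (α * w ^ ((π 1 : Fin 3) : ℕ) + β * a)
      * (α * w ^ ((π 1 : Fin 3) : ℕ) * q + β) := pairpr 1
  have pr2 : X 4 * X 5 = (α * w ^ ((π 2 : Fin 3) : ℕ) + β * a)
      * (α * w ^ ((π 2 : Fin 3) : ℕ) * q + β) := pairpr 2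
  refine ⟨?_, ?_, ?_, ?_⟩
  · unfold Q1
    linear_combination p0 + p1 + p2 + (-2*m) * h67pr + (α^2*(1+q^2)) * sum2
      + (2*α*β*(a+q)) * sum1 + (α^2*(1+q^2)*w) * hw3
      + (α^2*(1+q^2) + 2*α*β*(a+q)) * hwsum + (-β^2) * heq3
  · unfold Q2
    linear_combination p0 + p1 + h67sq + (-2*l) * pr2 + (α^2*(1+q^2)) * sum2
      + (2*α*β*(a+q)) * sum1 + (α^2*(1+q^2)*w) * hw3
      + (α^2*(1+q^2) + 2*α*β*(a+q)) * hwsum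
      + (-α^2*(w ^ ((π 2 : Fin 3) : ℕ))^2) * heq1
      + (-2*α*β*(w ^ ((π 2 : Fin 3) : ℕ))) * heq2 + (β^2) * heq4
  · unfold Q3
    linear_combination p0 + p2 + h67sq + (-2*l) * pr1 + (α^2*(1+q^2)) * sum2
      + (2*α*β*(a+q)) * sum1 + (α^2*(1+q^2)*w) * hw3
      + (α^2*(1+q^2) + 2*α*β*(a+q)) * hwsum
      + (-α^2*(w ^ ((π 1 : Fin 3) : ℕ))^2) * heq1
      + (-2*α*β*(w ^ ((π 1 : Fin 3) : ℕ))) * heq2 + (β^2) * heq4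
  · unfold Q4
    linear_combination p1 + p2 + h67sq + (-2*l) * pr0 + (α^2*(1+q^2)) * sum2
      + (2*α*β*(a+q)) * sum1 + (α^2*(1+q^2)*w) * hw3
      + (α^2*(1+q^2) + 2*α*β*(a+q)) * hwsum
      + (-α^2*(w ^ ((π 0 : Fin 3) : ℕ))^2) * heq1
      + (-2*α*β*(w ^ ((π 0 : Fin 3) : ℕ))) * heq2 + (β^2) * heq4

lemma linePlane8_FF (w q a c d : ℂ) :
    linePlane8 w q a c d = FF w q a c d 1 (fun _ => false) (fun _ => false) false := by
  have hU : UU w q 1 (fun _ => false) (fun _ => false) false = uvec w q := by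
    funext i
    show ((hsf (fun _ => false) (fd 1 (fun _ => false) false i) : ℂˣ) : ℂ)
        * uvec w q (fd 1 (fun _ => false) false i) = _
    rw [fd_id i, hsf_one, Pi.one_apply, Units.val_one, one_mul]
  have hV : VV a c d 1 (fun _ => false) (fun _ => false) false = vvec a c d := by
    funext i
    show ((hsf (fun _ => false) (fd 1 (fun _ => false) false i) : ℂˣ) : ℂ)
        * vvec a c d (fd 1 (fun _ => false) false i) = _
    rw [fd_id i, hsf_one, Pi.one_apply, Units.val_one, one_mul]
  show Submodule.span ℂ {uvec w q, vvec a c d} = Submodule.span ℂ _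
  rw [hU, hV]

lemma map_span_FF (w q a c d : ℂ) {σ : Equiv.Perm (Fin 8)} {h : Fin 8 → ℂˣ}
    {π : Equiv.Perm (Fin 3)} {t s : B3} {e : Bool}
    (hσ : ⇑σ = fd π t e) (hh : h = hsf s) :
    Submodule.map (permMap8 σ) (Submodule.map (diagMap8 h) (linePlane8 w q a c d))
      = FF w q a c d π t s e := by
  have hLP : linePlane8 w q a c d = Submodule.span ℂ {uvec w q, vvec a c d} := rfl
  rw [hLP, Submodule.map_span, Set.image_pair, Submodule.map_span, Set.image_pair]
  have h1 : permMap8 σ (diagMap8 h (uvec w q)) = UU w q π t s e := by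
    funext i
    show (diagMap8 h (uvec w q)) (σ i) = _
    show ((h (σ i) : ℂˣ) : ℂ) • uvec w q (σ i) = _
    rw [hh, smul_eq_mul, congrFun hσ i]
    rfl
  have h2 : permMap8 σ (diagMap8 h (vvec a c d)) = VV a c d π t s e := by
    funext i
    show (diagMap8 h (vvec a c d)) (σ i) = _
    show ((h (σ i) : ℂˣ) : ℂ) • vvec a c d (σ i) = _
    rw [hh, smul_eq_mul, congrFun hσ i]
    rfl
  rw [h1, h2]
  rfl

lemma nrm0 : ∀ π : Equiv.Perm (Fin 3),
    ((finRotate 3) ^ (3 - ((π 0 : Fin 3) : ℕ)) * π) 0 = 0 := by decide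

lemma nrm_shift : ∀ (π : Equiv.Perm (Fin 3)) (b : Fin 3),
    π b = ((finRotate 3) ^ (3 - ((π 0 : Fin 3) : ℕ)) * π) b + π 0 := by decide

set_option maxRecDepth 100000 in
set_option maxHeartbeats 1000000 in
lemma S0card :
    (Finset.univ.filter
      (fun p : Equiv.Perm (Fin 3) × B3 × B3 × Bool => p.1 0 = 0)).card = 256 := by decide

end Stmt16Aux

end


open Stmt16Aux in
theorem stmt_16 (w : ℂ) (hw : IsPrimitiveRoot w 3) :
    ∃ P : MvPolynomial (Fin 2) ℂ, P ≠ 0 ∧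
      ∀ l m : ℂ, MvPolynomial.eval ![l, m] P ≠ 0 →
        ∀ q a c d : ℂ, lineEqs8 l m q a c d →
          ({W : Submodule ℂ (Fin 8 → ℂ) |
              ∃ σ ∈ Gperm8, ∃ h ∈ Hsigns8,
                Submodule.map (permMap8 σ)
                  (Submodule.map (diagMap8 h) (linePlane8 w q a c d)) = W}.ncard = 256 ∧
            (∀ W : Submodule ℂ (Fin 8 → ℂ),
              (∃ σ ∈ Gperm8, ∃ h ∈ Hsigns8,
                Submodule.map (permMap8 σ)
                  (Submodule.map (diagMap8 h) (linePlane8 w q a c d)) = W) →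
              Module.finrank ℂ W = 2 ∧
                ∀ x ∈ W, Q1 m x = 0 ∧ Q2 l x = 0 ∧ Q3 l x = 0 ∧ Q4 l x = 0) ∧
            ∀ σ ∈ Gperm8, ∀ h ∈ Hsigns8,
              Submodule.map (permMap8 σ)
                  (Submodule.map (diagMap8 h) (linePlane8 w q a c d)) =
                  linePlane8 w q a c d →
                Submodule.map (permMap8 σ) (linePlane8 w q a c d) = linePlane8 w q a c d ∧
                Submodule.map (diagMap8 h) (linePlane8 w q a c d) = linePlane8 w q a c d) := by
  classical
  have hw3 : w ^ 3 = 1 := hw.pow_eq_one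
  have hw1 : w ≠ 1 := hw.ne_one (by norm_num)
  have hw0 : w ≠ 0 := by
    intro h0; rw [h0] at hw3; norm_num at hw3
  have hwsum : w ^ 2 + w + 1 = 0 := by
    have hf : (w - 1) * (w ^ 2 + w + 1) = 0 := by linear_combination hw3
    rcases mul_eq_zero.mp hf with h | h
    · exact absurd (by linear_combination h) hw1
    · exact h
  refine ⟨MvPolynomial.X 0 * MvPolynomial.X 1 * (MvPolynomial.X 0 ^ 2 - 1)
    * (MvPolynomial.X 1 ^ 2 - 1), ?_, ?_⟩
  · intro hP0
    have h := congrArg (MvPolynomial.eval (![2, 2] : Fin 2 → ℂ)) hP0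
    simp only [map_mul, map_sub, map_pow, map_one, MvPolynomial.eval_X, map_zero,
      Matrix.cons_val_zero, Matrix.cons_val_one, Matrix.head_cons] at h
    norm_num at h
  · intro l m hPlm q a c d heqs
    obtain ⟨heq1, heq2, heq3, heq4⟩ := heqs
    have hv : MvPolynomial.eval (![l, m] : Fin 2 → ℂ)
        (MvPolynomial.X 0 * MvPolynomial.X 1 * (MvPolynomial.X 0 ^ 2 - 1)
          * (MvPolynomial.X 1 ^ 2 - 1)) = l * m * (l ^ 2 - 1) * (m ^ 2 - 1) := by
      simp only [map_mul, map_sub, map_pow, map_one, MvPolynomial.eval_X,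
        Matrix.cons_val_zero, Matrix.cons_val_one, Matrix.head_cons]
    rw [hv] at hPlm
    have hl : l ≠ 0 := by intro h; apply hPlm; rw [h]; ring
    have hm : m ≠ 0 := by intro h; apply hPlm; rw [h]; ring
    have hl2 : l ^ 2 ≠ 1 := by
      intro h; apply hPlm
      have h1 : l ^ 2 - 1 = 0 := by rw [h]; ring
      rw [h1]; ring
    have hm2 : m ^ 2 ≠ 1 := by
      intro h; apply hPlm
      have h1 : m ^ 2 - 1 = 0 := by rw [h]; ring
      rw [h1]; ring
    have hq0 : q ≠ 0 := by
      intro h0; rw [h0] at heq1; simp at heq1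
    have hq2 : q ^ 2 ≠ 1 := by
      intro h
      have hf : (q - 1) * (q + 1) = 0 := by linear_combination h
      rcases mul_eq_zero.mp hf with h' | h'
      · apply hl2
        have hq1 : q = 1 := by linear_combination h'
        rw [hq1] at heq1
        linear_combination ((l - 1) / 2) * heq1
      · apply hl2
        have hq1 : q = -1 := by linear_combination h'
        rw [hq1] at heq1
        linear_combination (-(l + 1) / 2) * heq1
    have hE : l * q * (1 - l ^ 2) ≠ 0 := by
      refine mul_ne_zero (mul_ne_zero hl hq0) ?_
      intro h0
      exact hl2 (by linear_combination -h0)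
    have k1 : (a ^ 2 + 1) * (1 + l * q) ^ 2 = 2 * (l * q * (1 - l ^ 2)) := by
      linear_combination (a * (1 + l * q) - (l + q)) * heq2 + (1 + l ^ 2) * heq1
    have ha2 : a ^ 2 + 1 ≠ 0 := by
      intro h0
      rw [h0, zero_mul] at k1
      exact hE (by linear_combination (-1 / 2 : ℂ) * k1)
    have hc : c ≠ 0 := by
      intro h0
      rw [h0] at heq3
      apply ha2
      linear_combination (-1 / 3 : ℂ) * heq3
    have hd : d ≠ 0 := by
      intro h0
      rw [h0] at heq3
      apply ha2
      linear_combination (-1 / 3 : ℂ) * heq3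
    have hcd2 : c ^ 2 ≠ d ^ 2 := by
      intro hcd
      have k2 : (a ^ 2 - l * a + 1) * (1 + l * q) ^ 2 = 3 * (l * q * (1 - l ^ 2)) := by
        linear_combination (a * (1 + l * q) - (l + q) - l * (1 + l * q)) * heq2
          + (1 + 2 * l ^ 2) * heq1
      have s1 : c ^ 2 * (1 + l * q) ^ 2 = -3 * (l * q * (1 - l ^ 2)) := by
        linear_combination ((1 + l * q) ^ 2 / 2) * heq4 + ((1 + l * q) ^ 2 / 2) * hcd - k2
      have s1' : d ^ 2 * (1 + l * q) ^ 2 = -3 * (l * q * (1 - l ^ 2)) := by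
        linear_combination s1 - (1 + l * q) ^ 2 * hcd
      have s2 : m * (c * d) * (1 + l * q) ^ 2 = 3 * (l * q * (1 - l ^ 2)) := by
        linear_combination ((1 + l * q) ^ 2 / 2) * heq3 + (3 / 2 : ℂ) * k1
      have hkey : m ^ 2 * (c ^ 2 * (1 + l * q) ^ 2) * (d ^ 2 * (1 + l * q) ^ 2)
          = (m * (c * d) * (1 + l * q) ^ 2) ^ 2 := by ring
      rw [s1, s1', s2] at hkey
      have hfin : (m ^ 2 - 1) * (l * q * (1 - l ^ 2)) ^ 2 = 0 := by
        linear_combination (1 / 9 : ℂ) * hkey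
      rcases mul_eq_zero.mp hfin with h' | h'
      · exact hm2 (by linear_combination h')
      · exact hE ((pow_eq_zero_iff two_ne_zero).mp h')
    refine ⟨?_, ?_, ?_⟩
    · -- counting
      have hO : {W : Submodule ℂ (Fin 8 → ℂ) |
          ∃ σ ∈ Gperm8, ∃ h ∈ Hsigns8,
            Submodule.map (permMap8 σ)
              (Submodule.map (diagMap8 h) (linePlane8 w q a c d)) = W}
          = (fun p : Equiv.Perm (Fin 3) × B3 × B3 × Bool =>
              FF w q a c d p.1 p.2.1 p.2.2.1 p.2.2.2) '' {p | p.1 0 = 0} := by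
        ext W
        constructor
        · rintro ⟨σ, hσm, h, hhm, rfl⟩
          obtain ⟨π, t, e, hσ⟩ := perm_struct hσm
          obtain ⟨s, hh⟩ := sign_struct hhm
          rw [map_span_FF w q a c d hσ hh]
          refine ⟨((finRotate 3) ^ (3 - ((π 0 : Fin 3) : ℕ)) * π, t,
            fun j => s (π (((finRotate 3) ^ (3 - ((π 0 : Fin 3) : ℕ)) * π)⁻¹ j)), e),
            nrm0 π, ?_⟩
          refine (FF_eq_of_rel hw3 hw0 _ π t _ s e (π 0)
            (fun b => nrm_shift π b) (fun b => ?_)).symm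
          show s (π b) = s (π (((finRotate 3) ^ (3 - ((π 0 : Fin 3) : ℕ)) * π)⁻¹
            (((finRotate 3) ^ (3 - ((π 0 : Fin 3) : ℕ)) * π) b)))
          rw [(show ∀ (f : Equiv.Perm (Fin 3)) x, f⁻¹ (f x) = x from fun f x => Equiv.symm_apply_apply f x)]
        · rintro ⟨⟨π, t, s, e⟩, hp, rfl⟩
          obtain ⟨σ, hσm, hσ⟩ := struct_realize π t e
          exact ⟨σ, hσm, hsf s, sign_realize s, map_span_FF w q a c d hσ rfl⟩
      rw [hO]
      have hinj : Set.InjOn (fun p : Equiv.Perm (Fin 3) × B3 × B3 × Bool =>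
          FF w q a c d p.1 p.2.1 p.2.2.1 p.2.2.2) {p | p.1 0 = 0} := by
        rintro ⟨π₁, t₁, s₁, e₁⟩ h1 ⟨π₂, t₂, s₂, e₂⟩ h2 hΦeq
        simp only [Set.mem_setOf_eq] at h1 h2 hΦeq
        obtain ⟨ht, he, k, hk, hs⟩ := rel_of_FF_eq hw3 hw1 hw0 hq0 hq2 hc hd hcd2
          π₁ π₂ t₁ t₂ s₁ s₂ e₁ e₂ hΦeq.symm
        have hk0 : k = 0 := by
          have h' := hk 0
          rw [h1, h2] at h'
          simpa using h'.symm
        have hπ : π₂ = π₁ := Equiv.ext fun b => by rw [hk b, hk0, add_zero]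
        have hsfun : s₂ = s₁ := by
          funext j
          have h' := hs (π₁⁻¹ j)
          rw [hπ] at h'
          rwa [(show ∀ (f : Equiv.Perm (Fin 3)) x, f (f⁻¹ x) = x from fun f x => Equiv.apply_symm_apply f x)] at h'
        exact Prod.ext hπ.symm (Prod.ext ht (Prod.ext hsfun.symm he))
      rw [Set.ncard_image_of_injOn hinj]
      have hfs : {p : Equiv.Perm (Fin 3) × B3 × B3 × Bool | p.1 0 = 0}
          = ↑(Finset.univ.filter
              (fun p : Equiv.Perm (Fin 3) × B3 × B3 × Bool => p.1 0 = 0)) := by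
        ext p; simp
      rw [hfs, Set.ncard_coe_finset, S0card]
    · rintro W ⟨σ, hσm, h, hhm, rfl⟩
      obtain ⟨π, t, e, hσ⟩ := perm_struct hσm
      obtain ⟨s, hh⟩ := sign_struct hhm
      rw [map_span_FF w q a c d hσ hh]
      exact ⟨FF_rank hw0 hq0 hc hd π t s e, FF_LQ hw3 hwsum heq1 heq2 heq3 heq4 π t s e⟩
    · intro σ hσm h hhm hfix
      obtain ⟨π, t, e, hσ⟩ := perm_struct hσm
      obtain ⟨s, hh⟩ := sign_struct hhm
      have hFFfix : FF w q a c d π t s e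
          = FF w q a c d 1 (fun _ => false) (fun _ => false) false := by
        rw [← map_span_FF w q a c d hσ hh, hfix, linePlane8_FF]
      obtain ⟨ht, he, k, hk, hs⟩ := rel_of_FF_eq hw3 hw1 hw0 hq0 hq2 hc hd hcd2
        1 π (fun _ => false) t (fun _ => false) s false e hFFfix
      have hsall : s = fun _ => false := by
        funext j
        have h' := hs (π⁻¹ j)
        rwa [(show ∀ (f : Equiv.Perm (Fin 3)) x, f (f⁻¹ x) = x from fun f x => Equiv.apply_symm_apply f x)] at h'
      have hdiag : Submodule.map (diagMap8 h) (linePlane8 w q a c d)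
          = linePlane8 w q a c d := by
        have hid : diagMap8 h = LinearMap.id := by
          refine LinearMap.ext fun x => funext fun i => ?_
          show ((h i : ℂˣ) : ℂ) • x i = x i
          rw [hh, hsall, hsf_one, Pi.one_apply, Units.val_one, one_smul]
        rw [hid, Submodule.map_id]
      rw [hdiag] at hfix
      exact ⟨hfix, hdiag⟩
end

section
/- There exists a nonzero polynomial P ∈ ℂ[λ,μ] such that whenever P(λ,μ) ≠ 0 and (q,a,c,d) ∈ ℂ⁴ satisfies q² + 2λq + 1 = 0, a(1 + λq) = −(λ + q), 2μcd = 3a² + 3, and c² + d² + 2a² − 2λa + 2 = 0, the following holds with W = W(q,a,c,d): (i) every vector B ∈ ℂ⁸ such that ∇Qᵢ(P)·B = 0 for all P ∈ W and all i = 1,2,3,4 lies in W; and (ii) there exists a ℂ-linear map β : W → ℂ⁸ whose image is not contained in W such that ∇Qᵢ(P)·β(P) = 0 for every P ∈ W and every i = 1,2,3,4. (This expresses that the normal bundle of the line W on X_{λ,μ} is O ⊕ O(−2).) -/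
noncomputable section

private lemma fderiv_quad (cc : ℂ) (i0 i1 i2 i3 i4 i5 j0 j1 : Fin 8) (x B : Fin 8 → ℂ) :
    fderiv ℂ (fun y : Fin 8 → ℂ =>
        y i0 ^ 2 + y i1 ^ 2 + y i2 ^ 2 + y i3 ^ 2 + y i4 ^ 2 + y i5 ^ 2 - 2 * cc * y j0 * y j1)
      x B =
      2*x i0*B i0 + 2*x i1*B i1 + 2*x i2*B i2 + 2*x i3*B i3 + 2*x i4*B i4 + 2*x i5*B i5
        - 2*cc*(x j0*B j1 + x j1*B j0) := by
  have hp : ∀ i : Fin 8, HasFDerivAt (fun y : Fin 8 → ℂ => y i)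
      (ContinuousLinearMap.proj i : (Fin 8 → ℂ) →L[ℂ] ℂ) x :=
    fun i => (ContinuousLinearMap.proj (R := ℂ) (φ := fun _ : Fin 8 => ℂ) i).hasFDerivAt
  have hsq : ∀ i : Fin 8, HasFDerivAt (fun y : Fin 8 → ℂ => y i ^ 2)
      (x i • (ContinuousLinearMap.proj i : (Fin 8 → ℂ) →L[ℂ] ℂ)
        + x i • (ContinuousLinearMap.proj i : (Fin 8 → ℂ) →L[ℂ] ℂ)) x := by
    intro i
    simpa [pow_two, Pi.mul_def] using (hp i).mul (hp i)
  have hm : HasFDerivAt (fun y : Fin 8 → ℂ => 2 * cc * y j0 * y j1)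
      ((2 * cc * x j0) • (ContinuousLinearMap.proj j1 : (Fin 8 → ℂ) →L[ℂ] ℂ)
        + x j1 • ((2*cc) • (ContinuousLinearMap.proj j0 : (Fin 8 → ℂ) →L[ℂ] ℂ))) x :=
    ((hp j0).const_mul (2*cc)).mul (hp j1)
  have H := ((((((hsq i0).add (hsq i1)).add (hsq i2)).add (hsq i3)).add (hsq i4)).add
    (hsq i5)).sub hm
  rw [(show HasFDerivAt (fun y : Fin 8 → ℂ =>
      y i0 ^ 2 + y i1 ^ 2 + y i2 ^ 2 + y i3 ^ 2 + y i4 ^ 2 + y i5 ^ 2 - 2 * cc * y j0 * y j1) _ x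
    from H).fderiv]
  simp only [ContinuousLinearMap.add_apply, ContinuousLinearMap.sub_apply,
    ContinuousLinearMap.smul_apply, ContinuousLinearMap.proj_apply, smul_eq_mul]
  ring

private lemma fderiv_Q1' (m : ℂ) (x B : Fin 8 → ℂ) :
    fderiv ℂ (Q1 m) x B =
      2*x 0*B 0 + 2*x 1*B 1 + 2*x 2*B 2 + 2*x 3*B 3 + 2*x 4*B 4 + 2*x 5*B 5
        - 2*m*(x 6*B 7 + x 7*B 6) :=
  fderiv_quad m 0 1 2 3 4 5 6 7 x B

private lemma fderiv_Q2' (l : ℂ) (x B : Fin 8 → ℂ) :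
    fderiv ℂ (Q2 l) x B =
      2*x 0*B 0 + 2*x 1*B 1 + 2*x 2*B 2 + 2*x 3*B 3 + 2*x 6*B 6 + 2*x 7*B 7
        - 2*l*(x 4*B 5 + x 5*B 4) :=
  fderiv_quad l 0 1 2 3 6 7 4 5 x B

private lemma fderiv_Q3' (l : ℂ) (x B : Fin 8 → ℂ) :
    fderiv ℂ (Q3 l) x B =
      2*x 0*B 0 + 2*x 1*B 1 + 2*x 4*B 4 + 2*x 5*B 5 + 2*x 6*B 6 + 2*x 7*B 7
        - 2*l*(x 2*B 3 + x 3*B 2) :=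
  fderiv_quad l 0 1 4 5 6 7 2 3 x B

private lemma fderiv_Q4' (l : ℂ) (x B : Fin 8 → ℂ) :
    fderiv ℂ (Q4 l) x B =
      2*x 2*B 2 + 2*x 3*B 3 + 2*x 4*B 4 + 2*x 5*B 5 + 2*x 6*B 6 + 2*x 7*B 7
        - 2*l*(x 0*B 1 + x 1*B 0) :=
  fderiv_quad l 2 3 4 5 6 7 0 1 x B

theorem stmt_17 (w : ℂ) (hw : IsPrimitiveRoot w 3) :
    ∃ P : MvPolynomial (Fin 2) ℂ, P ≠ 0 ∧
      ∀ l m : ℂ, MvPolynomial.eval ![l, m] P ≠ 0 →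
        ∀ q a c d : ℂ, lineEqs8 l m q a c d →
          ((∀ B : Fin 8 → ℂ,
              (∀ x ∈ linePlane8 w q a c d,
                fderiv ℂ (Q1 m) x B = 0 ∧ fderiv ℂ (Q2 l) x B = 0 ∧
                fderiv ℂ (Q3 l) x B = 0 ∧ fderiv ℂ (Q4 l) x B = 0) →
              B ∈ linePlane8 w q a c d) ∧
            ∃ β : (linePlane8 w q a c d) →ₗ[ℂ] (Fin 8 → ℂ),
              ¬ (LinearMap.range β ≤ linePlane8 w q a c d) ∧
              ∀ x : linePlane8 w q a c d,
                fderiv ℂ (Q1 m) (x : Fin 8 → ℂ) (β x) = 0 ∧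
                fderiv ℂ (Q2 l) (x : Fin 8 → ℂ) (β x) = 0 ∧
                fderiv ℂ (Q3 l) (x : Fin 8 → ℂ) (β x) = 0 ∧
                fderiv ℂ (Q4 l) (x : Fin 8 → ℂ) (β x) = 0) := by
  classical
  refine ⟨MvPolynomial.X 0 * MvPolynomial.X 1 * (MvPolynomial.X 0 ^ 2 - 1) *
      (MvPolynomial.X 1 ^ 2 - 1), ?_, ?_⟩
  · intro h0
    have h := congrArg (MvPolynomial.eval ![(2:ℂ), 2]) h0
    simp at h
    norm_num at h
  intro l m hP q a c d hline
  obtain ⟨h1, h2, h3, h4⟩ := hline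
  -- nonvanishing conditions from P
  have hPe : l * m * (l ^ 2 - 1) * (m ^ 2 - 1) ≠ 0 := by
    simpa using hP
  have hl : l ≠ 0 := fun h => hPe (by rw [h]; ring)
  have hm0 : m ≠ 0 := fun h => hPe (by rw [h]; ring)
  have hl2 : l ^ 2 - 1 ≠ 0 := fun h => hPe (by
    have : l * m * (l ^ 2 - 1) * (m ^ 2 - 1) = l * m * 0 * (m ^ 2 - 1) := by rw [h]
    rw [this]; ring)
  have hm2 : m ^ 2 - 1 ≠ 0 := fun h => hPe (by
    have : l * m * (l ^ 2 - 1) * (m ^ 2 - 1) = l * m * (l ^ 2 - 1) * 0 := by rw [h]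
    rw [this]; ring)
  -- facts about the primitive cube root of unity
  have hw3 : w ^ 3 = 1 := hw.pow_eq_one
  have hw1 : w ≠ 1 := hw.ne_one (by norm_num)
  have hww : w ^ 2 + w + 1 = 0 := by
    have h0 : (w - 1) * (w ^ 2 + w + 1) = 0 := by linear_combination hw3
    rcases mul_eq_zero.mp h0 with h | h
    · exact absurd (by linear_combination h) hw1
    · exact h
  have hw0 : w ≠ 0 := by
    intro h
    rw [h] at hw3
    norm_num at hw3
  have h1w : (1 : ℂ) - w ≠ 0 := sub_ne_zero.mpr (Ne.symm hw1)
  -- algebraic consequences of the line equations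
  have hq0 : q ≠ 0 := by
    intro h
    rw [h] at h1
    norm_num at h1
  have hk : 1 + l * q ≠ 0 := by
    intro hlq
    have hq2 : q ^ 2 = 1 := by linear_combination h1 - 2 * hlq
    exact hl2 (by linear_combination (l * q - 1) * hlq - l ^ 2 * hq2)
  have haq : a * q = 1 := by
    have h0 : (a * q - 1) * (1 + l * q) = 0 := by linear_combination q * h2 - h1
    have := (mul_eq_zero.mp h0).resolve_right hk
    linear_combination this
  have ha0 : a ≠ 0 := by
    intro h
    rw [h, zero_mul] at haq
    exact zero_ne_one haq
  have ha2 : a ^ 2 + 2 * l * a + 1 = 0 := by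
    have h0 : (a ^ 2 + 2 * l * a + 1) * q ^ 2 = 0 := by
      linear_combination h1 + (a * q + 1 + 2 * l * q) * haq
    exact (mul_eq_zero.mp h0).resolve_right (pow_ne_zero 2 hq0)
  have hla : l * a ≠ 0 := mul_ne_zero hl ha0
  have h6la : (6 : ℂ) * l * a ≠ 0 := mul_ne_zero (mul_ne_zero (by norm_num) hl) ha0
  have hcd : c ^ 2 + d ^ 2 = 6 * l * a := by linear_combination h4 - 2 * ha2
  have hmcd : 2 * m * c * d = -(6 * l * a) := by linear_combination h3 + 3 * ha2
  have haq3 : a + q = -(2 * l) := by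
    have h0 : (a + q + 2 * l) * q = 0 := by linear_combination haq + h1
    have := (mul_eq_zero.mp h0).resolve_right hq0
    linear_combination this
  have hFne : a + q ≠ 0 := by
    rw [haq3]
    exact neg_ne_zero.mpr (mul_ne_zero two_ne_zero hl)
  have hc2d2 : c ^ 2 - d ^ 2 ≠ 0 := by
    intro hcc
    have hd3 : d ^ 2 = 3 * (l * a) := by linear_combination (1/2) * hcd - (1/2) * hcc
    have hc3 : c ^ 2 = 3 * (l * a) := by linear_combination (1/2) * hcd + (1/2) * hcc
    have h9 : 9 * (l * a) ^ 2 * (m ^ 2 - 1) = 0 := by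
      linear_combination ((2 * m * c * d - 6 * l * a)/4) * hmcd - m ^ 2 * c ^ 2 * hd3
        - 3 * m ^ 2 * (l * a) * hc3
    rcases mul_eq_zero.mp h9 with h | h
    · exact (mul_ne_zero (by norm_num) (pow_ne_zero 2 hla)) h
    · exact hm2 h
  -- membership of the two spanning vectors
  have hu : (![1, q, w, w * q, w ^ 2, w ^ 2 * q, 0, 0] : Fin 8 → ℂ) ∈ linePlane8 w q a c d :=
    Submodule.subset_span (Set.mem_insert _ _)
  have hv : (![a, 1, a, 1, a, 1, c, d] : Fin 8 → ℂ) ∈ linePlane8 w q a c d :=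
    Submodule.subset_span (Set.mem_insert_of_mem _ rfl)
  constructor
  · -- part (i)
    intro B hB
    have E1u : 2*(1:ℂ)*B 0 + 2*q*B 1 + 2*w*B 2 + 2*(w*q)*B 3 + 2*w^2*B 4 + 2*(w^2*q)*B 5
        - 2*m*((0:ℂ)*B 7 + (0:ℂ)*B 6) = 0 := by
      have h := (hB _ hu).1
      rw [fderiv_Q1'] at h
      exact h
    have E2u : 2*(1:ℂ)*B 0 + 2*q*B 1 + 2*w*B 2 + 2*(w*q)*B 3 + 2*(0:ℂ)*B 6 + 2*(0:ℂ)*B 7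
        - 2*l*(w^2*B 5 + (w^2*q)*B 4) = 0 := by
      have h := (hB _ hu).2.1
      rw [fderiv_Q2'] at h
      exact h
    have E3u : 2*(1:ℂ)*B 0 + 2*q*B 1 + 2*w^2*B 4 + 2*(w^2*q)*B 5 + 2*(0:ℂ)*B 6 + 2*(0:ℂ)*B 7
        - 2*l*(w*B 3 + (w*q)*B 2) = 0 := by
      have h := (hB _ hu).2.2.1
      rw [fderiv_Q3'] at h
      exact h
    have E4u : 2*w*B 2 + 2*(w*q)*B 3 + 2*w^2*B 4 + 2*(w^2*q)*B 5 + 2*(0:ℂ)*B 6 + 2*(0:ℂ)*B 7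
        - 2*l*((1:ℂ)*B 1 + q*B 0) = 0 := by
      have h := (hB _ hu).2.2.2
      rw [fderiv_Q4'] at h
      exact h
    have E1v : 2*a*B 0 + 2*(1:ℂ)*B 1 + 2*a*B 2 + 2*(1:ℂ)*B 3 + 2*a*B 4 + 2*(1:ℂ)*B 5
        - 2*m*(c*B 7 + d*B 6) = 0 := by
      have h := (hB _ hv).1
      rw [fderiv_Q1'] at h
      exact h
    have E2v : 2*a*B 0 + 2*(1:ℂ)*B 1 + 2*a*B 2 + 2*(1:ℂ)*B 3 + 2*c*B 6 + 2*d*B 7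
        - 2*l*(a*B 5 + (1:ℂ)*B 4) = 0 := by
      have h := (hB _ hv).2.1
      rw [fderiv_Q2'] at h
      exact h
    -- derived linear relations on B
    have hB0 : B 0 = a * B 1 := by
      have h0 : (B 0 - a * B 1) * (1 + l * q) = 0 := by
        linear_combination (1/2) * E1u - (1/2) * E4u - B 1 * h2
      have := (mul_eq_zero.mp h0).resolve_right hk
      linear_combination this
    have hB2 : B 2 = a * B 3 := by
      have h0 : (B 2 - a * B 3) * ((1 + l * q) * w) = 0 := by
        linear_combination (1/2) * E1u - (1/2) * E3u - w * B 3 * h2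
      have := (mul_eq_zero.mp h0).resolve_right (mul_ne_zero hk hw0)
      linear_combination this
    have hB4 : B 4 = a * B 5 := by
      have h0 : (B 4 - a * B 5) * ((1 + l * q) * w ^ 2) = 0 := by
        linear_combination (1/2) * E1u - (1/2) * E2u - w ^ 2 * B 5 * h2
      have := (mul_eq_zero.mp h0).resolve_right (mul_ne_zero hk (pow_ne_zero 2 hw0))
      linear_combination this
    have hF : B 1 + w * B 3 + w ^ 2 * B 5 = 0 := by
      have h0 : (a + q) * (B 1 + w * B 3 + w ^ 2 * B 5) = 0 := by
        linear_combination (1/2) * E1u - hB0 - w * hB2 - w ^ 2 * hB4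
      exact (mul_eq_zero.mp h0).resolve_left hFne
    have hI : c * B 6 + d * B 7 = 2 * l * a * (B 1 + B 3 + B 5) := by
      linear_combination (1/2) * E2v - a * hB0 - a * hB2 + l * hB4 - (B 1 + B 3) * ha2
    have hII : m * (d * B 6 + c * B 7) = -(2 * l * a * (B 1 + B 3 + B 5)) := by
      linear_combination (-1/2) * E1v + a * hB0 + a * hB2 + a * hB4 + (B 1 + B 3 + B 5) * ha2
    have hB6 : B 6 = (B 1 + B 3 + B 5)/3 * c := by
      have h0 : m * (c ^ 2 - d ^ 2) * (3 * B 6 - (B 1 + B 3 + B 5) * c) = 0 := by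
        linear_combination 3*m*c*hI - 3*d*hII - (B 1 + B 3 + B 5)*m*c*hcd
          + (B 1 + B 3 + B 5)*d*hmcd
      have h1' := (mul_eq_zero.mp h0).resolve_left (mul_ne_zero hm0 hc2d2)
      linear_combination (1/3) * h1'
    have hB7 : B 7 = (B 1 + B 3 + B 5)/3 * d := by
      have h0 : m * (c ^ 2 - d ^ 2) * (3 * B 7 - (B 1 + B 3 + B 5) * d) = 0 := by
        linear_combination (-3)*m*d*hI + 3*c*hII + (B 1 + B 3 + B 5)*m*d*hcd
          - (B 1 + B 3 + B 5)*c*hmcd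
      have h1' := (mul_eq_zero.mp h0).resolve_left (mul_ne_zero hm0 hc2d2)
      linear_combination (1/3) * h1'
    -- assemble the membership
    have g0 : a * (B 1 - (B 1 + B 3 + B 5)/3) * 1 + (B 1 + B 3 + B 5)/3 * a = B 0 := by
      linear_combination -hB0
    have g1 : a * (B 1 - (B 1 + B 3 + B 5)/3) * q + (B 1 + B 3 + B 5)/3 * 1 = B 1 := by
      linear_combination (B 1 - (B 1 + B 3 + B 5)/3) * haq
    have g2 : a * (B 1 - (B 1 + B 3 + B 5)/3) * w + (B 1 + B 3 + B 5)/3 * a = B 2 := by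
      linear_combination (a*(1 + 2*w)/3) * hF + (a*(-2*B 3 + B 5*(1 - 2*w))/3) * hww - hB2
    have g3 : a * (B 1 - (B 1 + B 3 + B 5)/3) * (w*q) + (B 1 + B 3 + B 5)/3 * 1 = B 3 := by
      linear_combination ((1 + 2*w)/3) * hF + ((-2*B 3 + B 5*(1 - 2*w))/3) * hww
        + (w*B 1 - w*(B 1 + B 3 + B 5)/3) * haq
    have g4 : a * (B 1 - (B 1 + B 3 + B 5)/3) * w^2 + (B 1 + B 3 + B 5)/3 * a = B 4 := by
      linear_combination (a*(1 + 2*w^2)/3) * hF + (a/3)*((1 - 2*w)*B 3 - 2*(w^2 - w + 1)*B 5) * hww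
        - hB4
    have g5 : a * (B 1 - (B 1 + B 3 + B 5)/3) * (w^2*q) + (B 1 + B 3 + B 5)/3 * 1 = B 5 := by
      linear_combination ((1 + 2*w^2)/3) * hF + (1/3)*((1 - 2*w)*B 3 - 2*(w^2 - w + 1)*B 5) * hww
        + (w^2*(B 1 - (B 1 + B 3 + B 5)/3)) * haq
    have g6 : a * (B 1 - (B 1 + B 3 + B 5)/3) * 0 + (B 1 + B 3 + B 5)/3 * c = B 6 := by
      linear_combination -hB6
    have g7 : a * (B 1 - (B 1 + B 3 + B 5)/3) * 0 + (B 1 + B 3 + B 5)/3 * d = B 7 := by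
      linear_combination -hB7
    refine Submodule.mem_span_pair.mpr
      ⟨a * (B 1 - (B 1 + B 3 + B 5)/3), (B 1 + B 3 + B 5)/3, funext fun i => ?_⟩
    fin_cases i
    · exact g0
    · exact g1
    · exact g2
    · exact g3
    · exact g4
    · exact g5
    · exact g6
    · exact g7
  · -- part (ii)
    have hL : ∃ L : (Fin 8 → ℂ) →ₗ[ℂ] (Fin 8 → ℂ),
        L ![1, q, w, w * q, w ^ 2, w ^ 2 * q, 0, 0] = ![0, 0, 0, 0, 0, 0, c, d] ∧
        L ![a, 1, a, 1, a, 1, c, d] = ![a^2, a, a^2*w^2, a*w^2, a^2*w, a*w, 0, 0] := by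
      refine ⟨((LinearMap.proj (R := ℂ) (φ := fun _ : Fin 8 => ℂ) 0 - LinearMap.proj 2)).smulRight
          ((1 - w)⁻¹ • ![0, 0, 0, 0, 0, 0, c, d])
        + ((c • LinearMap.proj (R := ℂ) (φ := fun _ : Fin 8 => ℂ) 6 + d • LinearMap.proj 7)).smulRight
          ((6 * l * a)⁻¹ • ![a^2, a, a^2*w^2, a*w^2, a^2*w, a*w, 0, 0]), ?_, ?_⟩
      · show ((1:ℂ) - w) • ((1 - w)⁻¹ • (![0, 0, 0, 0, 0, 0, c, d] : Fin 8 → ℂ))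
            + (c * 0 + d * 0) • ((6 * l * a)⁻¹ •
              (![a^2, a, a^2*w^2, a*w^2, a^2*w, a*w, 0, 0] : Fin 8 → ℂ))
          = ![0, 0, 0, 0, 0, 0, c, d]
        rw [smul_smul, mul_inv_cancel₀ h1w]
        simp
      · show (a - a) • ((1 - w)⁻¹ • (![0, 0, 0, 0, 0, 0, c, d] : Fin 8 → ℂ))
            + (c * c + d * d) • ((6 * l * a)⁻¹ •
              (![a^2, a, a^2*w^2, a*w^2, a^2*w, a*w, 0, 0] : Fin 8 → ℂ))
          = ![a^2, a, a^2*w^2, a*w^2, a^2*w, a*w, 0, 0]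
        rw [smul_smul, smul_smul]
        have hone : (c * c + d * d) * (6 * l * a)⁻¹ = 1 := by
          field_simp
          linear_combination hcd
        rw [hone, sub_self, zero_mul, zero_smul, one_smul, zero_add]
    obtain ⟨L, hLu, hLv⟩ := hL
    refine ⟨L.comp (linePlane8 w q a c d).subtype, ?_, ?_⟩
    · -- the image is not contained in W
      intro hle
      have hmem : (![0, 0, 0, 0, 0, 0, c, d] : Fin 8 → ℂ) ∈ linePlane8 w q a c d := by
        apply hle
        exact LinearMap.mem_range.mpr ⟨⟨_, hu⟩, hLu⟩
      obtain ⟨s, t, hst⟩ := Submodule.mem_span_pair.mp hmem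
      have c0 : s * 1 + t * a = (0:ℂ) := congrFun hst 0
      have c2' : s * w + t * a = (0:ℂ) := congrFun hst 2
      have c6 : s * 0 + t * c = c := congrFun hst 6
      have c7 : s * 0 + t * d = d := congrFun hst 7
      have hs : s = 0 := by
        have h0 : s * (1 - w) = 0 := by linear_combination c0 - c2'
        exact (mul_eq_zero.mp h0).resolve_right h1w
      have ht : t = 0 := by
        rw [hs] at c0
        have h0 : t * a = 0 := by linear_combination c0
        exact (mul_eq_zero.mp h0).resolve_right ha0
      apply h6la
      have hc' : c = 0 := by
        rw [hs, ht] at c6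
        linear_combination -c6
      have hd' : d = 0 := by
        rw [hs, ht] at c7
        linear_combination -c7
      rw [← hcd, hc', hd']
      ring
    · -- the section kills all four gradients
      intro x
      obtain ⟨s, t, hst⟩ := Submodule.mem_span_pair.mp x.2
      have hβx : (L.comp (linePlane8 w q a c d).subtype) x
          = s • (![0, 0, 0, 0, 0, 0, c, d] : Fin 8 → ℂ)
            + t • (![a^2, a, a^2*w^2, a*w^2, a^2*w, a*w, 0, 0] : Fin 8 → ℂ) := by
        show L (x : Fin 8 → ℂ) = _
        rw [← hst, map_add, map_smul, map_smul, hLu, hLv]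
      have G1 : 2*(s*1 + t*a)*(s*0 + t*a^2) + 2*(s*q + t*1)*(s*0 + t*a)
          + 2*(s*w + t*a)*(s*0 + t*(a^2*w^2)) + 2*(s*(w*q) + t*1)*(s*0 + t*(a*w^2))
          + 2*(s*w^2 + t*a)*(s*0 + t*(a^2*w)) + 2*(s*(w^2*q) + t*1)*(s*0 + t*(a*w))
          - 2*m*((s*0 + t*c)*(s*d + t*0) + (s*0 + t*d)*(s*c + t*0)) = 0 := by
        linear_combination (-2*s*t) * h3 + (6*s*t) * haq
          + (4*s*t*(a^2 + a*q)*(w - 1) + 2*t^2*(a^3 + a)) * hww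
      have G2 : 2*(s*1 + t*a)*(s*0 + t*a^2) + 2*(s*q + t*1)*(s*0 + t*a)
          + 2*(s*w + t*a)*(s*0 + t*(a^2*w^2)) + 2*(s*(w*q) + t*1)*(s*0 + t*(a*w^2))
          + 2*(s*0 + t*c)*(s*c + t*0) + 2*(s*0 + t*d)*(s*d + t*0)
          - 2*l*((s*w^2 + t*a)*(s*0 + t*(a*w)) + (s*(w^2*q) + t*1)*(s*0 + t*(a^2*w))) = 0 := by
        linear_combination (4*s*t - 2*w*a*t^2) * ha2 + (s*t*(4 - 2*l*a)) * haq
          + (2*s*t) * hcd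
          + (2*s*t*((a^2 + a*q) - l*(a + a^2*q))*(w - 1) + 2*t^2*(a^3 + a)) * hww
      have G3 : 2*(s*1 + t*a)*(s*0 + t*a^2) + 2*(s*q + t*1)*(s*0 + t*a)
          + 2*(s*w^2 + t*a)*(s*0 + t*(a^2*w)) + 2*(s*(w^2*q) + t*1)*(s*0 + t*(a*w))
          + 2*(s*0 + t*c)*(s*c + t*0) + 2*(s*0 + t*d)*(s*d + t*0)
          - 2*l*((s*w + t*a)*(s*0 + t*(a*w^2)) + (s*(w*q) + t*1)*(s*0 + t*(a^2*w^2))) = 0 := by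
        linear_combination (4*s*t - 2*w^2*a*t^2) * ha2 + (s*t*(4 - 2*l*a)) * haq
          + (2*s*t) * hcd
          + (2*s*t*((a^2 + a*q) - l*(a + a^2*q))*(w - 1) + 2*t^2*(a^3 + a)) * hww
      have G4 : 2*(s*w + t*a)*(s*0 + t*(a^2*w^2)) + 2*(s*(w*q) + t*1)*(s*0 + t*(a*w^2))
          + 2*(s*w^2 + t*a)*(s*0 + t*(a^2*w)) + 2*(s*(w^2*q) + t*1)*(s*0 + t*(a*w))
          + 2*(s*0 + t*c)*(s*c + t*0) + 2*(s*0 + t*d)*(s*d + t*0)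
          - 2*l*((s*1 + t*a)*(s*0 + t*a) + (s*q + t*1)*(s*0 + t*a^2)) = 0 := by
        linear_combination (4*s*t - 2*a*t^2) * ha2 + (s*t*(4 - 2*l*a)) * haq
          + (2*s*t) * hcd
          + (4*s*t*(a^2 + a*q)*(w - 1) + 2*t^2*(a^3 + a)) * hww
      refine ⟨?_, ?_, ?_, ?_⟩
      · rw [hβx, ← hst, fderiv_Q1']
        exact G1
      · rw [hβx, ← hst, fderiv_Q2']
        exact G2
      · rw [hβx, ← hst, fderiv_Q3']
        exact G3
      · rw [hβx, ← hst, fderiv_Q4']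
        exact G4
end
end
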